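/- Let (A,C,ι) be a DG open Frobenius-like algebra, with • and * on A⊗̂Ω̂(C) as above. Then for all α,β,γ: (α•β)*γ = α•(β*γ) + (-1)^{|β|(|γ|+1)}(α*γ)•β. That is, the operation (−)*γ is a graded derivation of the product • (exactly, at chain level, from the right input). -/

import Mathlib

noncomputable section

/-- Degree of a bar word `[a₁|⋯|aₙ]`, each letter contributing `deg aᵢ − 1`. -/
def wdeg {Cb : Type*} (degC : Cb → ℤ) (l : List Cb) : ℤ :=
  (l.map (fun a => degC a - 1)).sum

lemma wdeg_append {Cb : Type*} (degC : Cb → ℤ) (a b : List Cb) :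
    wdeg degC (a ++ b) = wdeg degC a + wdeg degC b := by
  simp [wdeg]

lemma neg_aux {k : Type*} [Field k] (A B C D E c : ℤ) (P : k) (h : C + D + E = A + B + 2*c) :
    (-1:k)^A * ((-1:k)^B * P) = ((-1:k)^C * ((-1:k)^D * P)) * (-1:k)^E := by
  have hne : (-1:k) ≠ 0 := by norm_num
  have h2 : (-1:k)^(C+D+E) = (-1:k)^(A+B) := by
    rw [h, zpow_add₀ hne, zpow_mul]; norm_num
  calc (-1:k)^A * ((-1:k)^B * P) = (-1:k)^(A+B) * P := by rw [zpow_add₀ hne]; ring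
    _ = (-1:k)^(C+D+E) * P := by rw [h2]
    _ = _ := by rw [zpow_add₀ hne, zpow_add₀ hne]; ring

/-- For a DG open Frobenius-like algebra `(A,C,ι)`, with the
loop product `•` and the star operation `*` on `A⊗̂Ω̂(C)`, one has the exact
chain-level derivation identity (Lemma 4.5 (1))
`(α•β)*γ = α•(β*γ) + (-1)^{|β|(|γ|+1)} (α*γ)•β`. -/
theorem star_right_derivation_of_loop_product
    {k : Type*} [Field k] (Ab Cb : Type*)
    (degA : Ab → ℤ) (degC : Cb → ℤ)
    (pair : Cb → Ab → k)  -- the pairing ε(a·y)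
    (hpair_deg : ∀ a y, pair a y ≠ 0 → degC a + degA y = 0)
    (mulA : Ab → Ab → (Ab →₀ k))
    (hmulA_deg : ∀ x y z, z ∈ (mulA x y).support → degA z = degA x + degA y)
    (mul star :
      ((Ab × List Cb) →₀ k) →ₗ[k] ((Ab × List Cb) →₀ k) →ₗ[k] ((Ab × List Cb) →₀ k))
    (hmul : ∀ (x : Ab) (l : List Cb) (y : Ab) (m : List Cb),
      mul (Finsupp.single (x, l) 1) (Finsupp.single (y, m) 1) =
        ((-1 : k) ^ (degA y * wdeg degC l)) •
          (mulA x y).sum (fun z c => c • Finsupp.single (z, l ++ m) (1 : k)))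
    (hstar : ∀ (x : Ab) (l : List Cb) (y : Ab) (m : List Cb),
      star (Finsupp.single (x, l) 1) (Finsupp.single (y, m) 1) =
        ∑ i : Fin l.length,
          (((-1 : k) ^ (degA y +
              (degA y + wdeg degC m - 1) * wdeg degC (l.drop (i.1 + 1)))) *
            pair (l.get i) y) •
            Finsupp.single (x, l.take i.1 ++ m ++ l.drop (i.1 + 1)) (1 : k)) :
    ∀ (x : Ab) (al : List Cb) (y : Ab) (bl : List Cb) (z : Ab) (cl : List Cb),
      star (mul (Finsupp.single (x, al) 1) (Finsupp.single (y, bl) 1))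
          (Finsupp.single (z, cl) 1) =
        mul (Finsupp.single (x, al) 1)
          (star (Finsupp.single (y, bl) 1) (Finsupp.single (z, cl) 1)) +
        ((-1 : k) ^ ((degA y + wdeg degC bl) * (degA z + wdeg degC cl + 1))) •
          mul (star (Finsupp.single (x, al) 1) (Finsupp.single (z, cl) 1))
            (Finsupp.single (y, bl) 1) := by
  intro x al y bl z cl
  have starF : ∀ m : List Cb,
      star ((mulA x y).sum fun w c => c • Finsupp.single (w, m) (1:k))
          (Finsupp.single (z, cl) 1) =
        ∑ i : Fin m.length,
          (((-1 : k) ^ (degA z +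
              (degA z + wdeg degC cl - 1) * wdeg degC (m.drop (i.1 + 1)))) *
            pair (m.get i) z) •
            ((mulA x y).sum fun w c =>
              c • Finsupp.single (w, m.take i.1 ++ cl ++ m.drop (i.1 + 1)) (1:k)) := by
    intro m
    rw [Finsupp.sum, map_sum, LinearMap.sum_apply]
    simp only [LinearMap.map_smul, LinearMap.smul_apply, hstar]
    simp only [Finsupp.sum, Finset.smul_sum]
    rw [Finset.sum_comm]
    exact Finset.sum_congr rfl fun i _ => Finset.sum_congr rfl fun w _ => smul_comm _ _ _
  rw [hmul x al y bl, LinearMap.map_smul, LinearMap.smul_apply, starF (al ++ bl)]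
  have hlen : al.length + bl.length = (al ++ bl).length := by simp
  rw [← Fin.sum_congr' _ hlen, Fin.sum_univ_add, smul_add, Finset.smul_sum, Finset.smul_sum]
  rw [hstar y bl z cl, hstar x al z cl]
  simp only [map_sum, LinearMap.map_smul, LinearMap.sum_apply, LinearMap.smul_apply, hmul]
  rw [Finset.smul_sum]
  refine (add_comm _ _).trans ?_
  congr 1
  · -- j-part
    refine Finset.sum_congr rfl fun j _ => ?_
    simp only [Fin.coe_cast, Fin.coe_natAdd, List.get_eq_getElem, add_assoc,
      List.take_length_add_append, List.drop_length_add_append,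
      List.getElem_append_right (Nat.le_add_right al.length j.1),
      Nat.add_sub_cancel_left, List.append_assoc]
    rw [smul_smul, smul_smul]
    congr 1
    ring
  · -- i-part
    refine Finset.sum_congr rfl fun i _ => ?_
    have h1 : i.1 < al.length := i.isLt
    simp only [Fin.coe_cast, Fin.coe_castAdd, List.get_eq_getElem,
      List.getElem_append_left h1, List.take_append_of_le_length h1.le,
      List.drop_append_of_le_length h1, List.append_assoc]
    rw [smul_smul, smul_smul, smul_smul]
    congr 1
    by_cases hp0 : pair (al[i.1]'h1) z = 0
    · simp [hp0]
    · have hdeg : degC (al[i.1]'h1) = -(degA z) := by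
        have := hpair_deg _ z hp0; linarith
      have hsplit : wdeg degC al =
          wdeg degC (al.take i.1) + ((degC (al[i.1]'h1) - 1) + wdeg degC (al.drop (i.1+1))) := by
        conv_lhs => rw [← List.take_append_drop i.1 al, ← List.getElem_cons_drop h1]
        rw [wdeg_append]
        simp only [wdeg, List.map_cons, List.sum_cons]
      rw [wdeg_append, wdeg_append, wdeg_append, hsplit, hdeg]
      exact neg_aux _ _ _ _ _ (degA y * (degA z + wdeg degC cl + 1) + wdeg degC bl) _ (by ring)
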